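/- arXiv:2109.08340 — 5 statements merged into one kernel-verified Lean document; each statement's English description precedes it below -/
import Mathlib

section
/- Let S = (U, F) be a finite undirected graph on q nodes with incidence matrix columns z_j ∈ ℝ^q (z_j = e_i for a self-loop at u_i, z_j = (e_k+e_ℓ)/2 for an edge between distinct u_k, u_ℓ). If f_i is an edge between distinct nodes u_k, u_ℓ such that not both endpoints carry self-loops, then z_i is an extremal point of the edge polytope X(S). -/
/-- The halved incidence vector of the edge (k, ℓ): `e k` when `k = ℓ` (self-loop),
`(e k + e ℓ)/2` when `k ≠ ℓ`. -/
noncomputable def incVec {q : ℕ} (k ℓ : Fin q) : Fin q → ℝ :=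
  (1 / 2 : ℝ) • (Pi.single k 1 + Pi.single ℓ 1)

/-- The edge polytope `X(S)`. -/
noncomputable def edgePolytope {q : ℕ} (F : Fin q → Fin q → Prop) : Set (Fin q → ℝ) :=
  convexHull ℝ {x | ∃ k ℓ, F k ℓ ∧ x = incVec k ℓ}

lemma incVec_comm {q : ℕ} (k ℓ : Fin q) : incVec k ℓ = incVec ℓ k := by
  simp [incVec, add_comm]

lemma key_extreme {q : ℕ} (F : Fin q → Fin q → Prop) (k ℓ : Fin q) (hkl : k ≠ ℓ)
    (hedge : F k ℓ) (hℓℓ : ¬ F ℓ ℓ) :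
    incVec k ℓ ∈ Set.extremePoints ℝ (edgePolytope F) := by
  classical
  set f : (Fin q → ℝ) →ₗ[ℝ] ℝ := LinearMap.proj k + (2 : ℝ) • LinearMap.proj ℓ with hf
  have hfapply : ∀ y : Fin q → ℝ, f y = y k + 2 * y ℓ := by
    intro y; simp [hf, smul_eq_mul]
  have hfx : f (incVec k ℓ) = 3 / 2 := by
    simp [hfapply, incVec, Pi.single_apply, hkl, hkl.symm]
    norm_num
  -- bound on generators, with equality only at incVec k ℓ
  have hgen : ∀ a b : Fin q, F a b →
      f (incVec a b) ≤ 3 / 2 ∧ (f (incVec a b) = 3 / 2 → incVec a b = incVec k ℓ) := by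
    intro a b hab
    have hval : f (incVec a b) = (1 / 2) * ((if k = a then (1:ℝ) else 0) +
        (if k = b then (1:ℝ) else 0)) + ((if ℓ = a then (1:ℝ) else 0) +
        (if ℓ = b then (1:ℝ) else 0)) := by
      simp [hfapply, incVec, Pi.single_apply]
      split_ifs <;> norm_num
    by_cases hka : k = a <;> by_cases hla : ℓ = a <;>
      by_cases hkb : k = b <;> by_cases hlb : ℓ = b
    all_goals try subst hka
    all_goals try subst hla
    all_goals try subst hkb
    all_goals try subst hlb
    all_goals first
      | exact absurd rfl hkl
      | exact absurd hab hℓℓ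
      | (constructor
         · rw [hval]; split_ifs <;> first | norm_num | simp_all
         · intro h
           first
             | rfl
             | exact incVec_comm _ _
             | (exfalso; rw [hval] at h; split_ifs at h <;>
                  first | norm_num at h | simp_all))
  -- every point of the polytope satisfies f y ≤ 3/2
  have hBound : ∀ y ∈ edgePolytope F, f y ≤ 3 / 2 := by
    intro y hy
    have hconv : Convex ℝ {y : Fin q → ℝ | f y ≤ 3 / 2} :=
      convex_halfSpace_le f.isLinear _
    have hsub : {x : Fin q → ℝ | ∃ a b, F a b ∧ x = incVec a b} ⊆
        {y : Fin q → ℝ | f y ≤ 3 / 2} := by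
      rintro x ⟨a, b, hab, rfl⟩
      exact (hgen a b hab).1
    exact convexHull_min hsub hconv hy
  -- uniqueness of the maximizer
  have hU : ∀ y ∈ edgePolytope F, f y = 3 / 2 → y = incVec k ℓ := by
    intro y hy hfy
    rw [edgePolytope, convexHull_eq] at hy
    obtain ⟨ι, t, w, z, hw0, hw1, hz, hyc⟩ := hy
    have hsum : y = ∑ i ∈ t, w i • z i := by
      rw [← hyc, Finset.centerMass_eq_of_sum_1 _ _ hw1]
    have hle : ∀ i ∈ t, w i * f (z i) ≤ w i * (3 / 2) := by
      intro i hi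
      obtain ⟨a, b, hab, hz'⟩ := hz i hi
      exact mul_le_mul_of_nonneg_left (by rw [hz']; exact (hgen a b hab).1) (hw0 i hi)
    have hfy' : ∑ i ∈ t, w i * f (z i) = ∑ i ∈ t, w i * (3 / 2) := by
      rw [← Finset.sum_mul, hw1, one_mul, ← hfy, hsum, map_sum]
      simp [smul_eq_mul]
    have heq : ∀ i ∈ t, w i * f (z i) = w i * (3 / 2) :=
      (Finset.sum_eq_sum_iff_of_le hle).mp hfy'
    have hzi : ∀ i ∈ t, w i • z i = w i • incVec k ℓ := by
      intro i hi
      rcases eq_or_lt_of_le (hw0 i hi) with h0 | hpos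
      · simp [← h0]
      · obtain ⟨a, b, hab, hz'⟩ := hz i hi
        have hfz : f (z i) = 3 / 2 := mul_left_cancel₀ (ne_of_gt hpos) (heq i hi)
        rw [hz', (hgen a b hab).2 (by rw [← hz']; exact hfz)]
    rw [hsum, Finset.sum_congr rfl hzi, ← Finset.sum_smul, hw1, one_smul]
  -- conclude
  rw [mem_extremePoints]
  refine ⟨subset_convexHull ℝ _ ⟨k, ℓ, hedge, rfl⟩, ?_⟩
  intro x₁ hx₁ x₂ hx₂ hseg
  obtain ⟨a, b, ha, hb, hab, hxe⟩ := hseg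
  have h1 : f x₁ ≤ 3 / 2 := hBound _ hx₁
  have h2 : f x₂ ≤ 3 / 2 := hBound _ hx₂
  have hcomb : a * f x₁ + b * f x₂ = 3 / 2 := by
    rw [← hfx, ← hxe]
    simp [smul_eq_mul]
  have e1 : f x₁ = 3 / 2 := by nlinarith
  have e2 : f x₂ = 3 / 2 := by nlinarith
  exact ⟨hU _ hx₁ e1, hU _ hx₂ e2⟩

/-- if the edge `(k, ℓ)` joins two distinct nodes and it is not the case
that both endpoints carry self-loops, then its generator is an extremal point of the
edge polytope. -/
theorem edge_not_between_selfLoops_extreme {q : ℕ} (F : Fin q → Fin q → Prop)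
    (Fsymm : ∀ k ℓ, F k ℓ → F ℓ k) (k ℓ : Fin q) (hkl : k ≠ ℓ) (hedge : F k ℓ)
    (hnot : ¬ (F k k ∧ F ℓ ℓ)) :
    incVec k ℓ ∈ Set.extremePoints ℝ (edgePolytope F) := by
  rcases not_and_or.mp hnot with hkk | hll
  · rw [incVec_comm]
    exact key_extreme F ℓ k hkl.symm (Fsymm _ _ hedge) hkk
  · exact key_extreme F k ℓ hkl hedge hll
end

section
/- Let S be a connected finite undirected graph on q nodes, possibly with self-loops. If S contains an odd cycle (where a self-loop counts as an odd cycle), then the affine dimension (rank) of its edge polytope X(S) is q − 1; otherwise (S bipartite with no self-loops) the rank of X(S) is q − 2. -/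
/-- `S` is connected: any two nodes are joined by a walk. -/
def GraphConnected {q : ℕ} (F : Fin q → Fin q → Prop) : Prop :=
  ∀ i j : Fin q, Relation.ReflTransGen F i j

/-- `S` has an odd cycle (a self-loop counts as an odd cycle); for a connected graph
this is equivalent to `S` not being 2-colorable (not bipartite, no self-loops). -/
def HasOddCycle {q : ℕ} (F : Fin q → Fin q → Prop) : Prop :=
  ¬ ∃ c : Fin q → Bool, ∀ i j, F i j → c i ≠ c j

namespace EPAux

open Module Submodule

variable {q : ℕ}

/-- weighted-sum linear functional -/
noncomputable def wt (s : Fin q → ℝ) : (Fin q → ℝ) →ₗ[ℝ] ℝ where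
  toFun x := ∑ i, s i * x i
  map_add' x y := by simp [mul_add, Finset.sum_add_distrib]
  map_smul' r x := by simp [Finset.mul_sum, mul_left_comm]

lemma wt_single (s : Fin q → ℝ) (k : Fin q) : wt s (Pi.single k 1) = s k := by
  simp [wt, Pi.single_apply]

/-- step relation tracking parity -/
def Step (F : Fin q → Fin q → Prop) : Fin q × Bool → Fin q × Bool → Prop :=
  fun p r => F p.1 r.1 ∧ r.2 = !p.2

lemma mem_of_walk {F : Fin q → Fin q → Prop} {W : Submodule ℝ (Fin q → ℝ)}
    (hW : ∀ k ℓ, F k ℓ → Pi.single k (1:ℝ) + Pi.single ℓ 1 ∈ W)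
    {i : Fin q} {p : Fin q × Bool}
    (h : Relation.ReflTransGen (Step F) (i, false) p) :
    Pi.single i (1:ℝ) + (cond p.2 1 (-1) : ℝ) • (Pi.single p.1 1 : Fin q → ℝ) ∈ W := by
  induction h with
  | refl =>
      have : Pi.single i (1:ℝ) + ((-1 : ℝ)) • (Pi.single i 1 : Fin q → ℝ) = 0 := by
        simp
      simpa [this] using W.zero_mem
  | tail h step ih =>
      rename_i p' p
      obtain ⟨k, c⟩ := p'
      obtain ⟨j, b⟩ := p
      obtain ⟨hF, hb⟩ := step
      have hkj := hW k j hF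
      cases c with
      | false =>
          have hb' : b = true := by simpa using hb
          subst hb'
          have := W.add_mem ih hkj
          convert this using 1
          simp only [cond]
          module
      | true =>
          have hb' : b = false := by simpa using hb
          subst hb'
          have := W.sub_mem ih hkj
          convert this using 1
          simp only [cond]
          module

lemma walk_total {F : Fin q → Fin q → Prop} (hconn : GraphConnected F) (i j : Fin q) :
    ∃ b, Relation.ReflTransGen (Step F) (i, false) (j, b) := by
  have h := hconn i j
  induction h with
  | refl => exact ⟨false, .refl⟩
  | tail h step ih =>
      obtain ⟨b, hb⟩ := ih
      exact ⟨!b, hb.tail ⟨step, rfl⟩⟩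

lemma exists_both {F : Fin q → Fin q → Prop} (hodd : HasOddCycle F)
    (hconn : GraphConnected F) (z : Fin q) :
    ∃ j, Relation.ReflTransGen (Step F) (z, false) (j, false) ∧
      Relation.ReflTransGen (Step F) (z, false) (j, true) := by
  classical
  by_contra h
  push_neg at h
  apply hodd
  refine ⟨fun j => if Relation.ReflTransGen (Step F) (z, false) (j, true) then true
    else false, ?_⟩
  intro i j hF hc
  by_cases hi : Relation.ReflTransGen (Step F) (z, false) (i, true) <;>
    by_cases hj : Relation.ReflTransGen (Step F) (z, false) (j, true) <;>
      simp [hi, hj] at hc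
  · exact h j (hi.tail ⟨hF, rfl⟩) hj
  · obtain ⟨b, hb⟩ := walk_total hconn z i
    cases b with
    | false => exact hj (hb.tail ⟨hF, rfl⟩)
    | true => exact hi hb

lemma single_mem_all {F : Fin q → Fin q → Prop} {W : Submodule ℝ (Fin q → ℝ)}
    (hW : ∀ k ℓ, F k ℓ → Pi.single k (1:ℝ) + Pi.single ℓ 1 ∈ W)
    (hconn : GraphConnected F) (hodd : HasOddCycle F) (i : Fin q) :
    (Pi.single i 1 : Fin q → ℝ) ∈ W := by
  have hq : 0 < q := i.pos
  set z : Fin q := ⟨0, hq⟩ with hz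
  obtain ⟨j, hje, hjo⟩ := exists_both hodd hconn z
  have h1 := mem_of_walk hW hje
  have h2 := mem_of_walk hW hjo
  have hzW : (Pi.single z 1 : Fin q → ℝ) ∈ W := by
    have := W.smul_mem (1/2 : ℝ) (W.add_mem h1 h2)
    convert this using 1
    simp only [cond]
    module
  obtain ⟨b, hb⟩ := walk_total hconn z i
  have h3 := mem_of_walk hW hb
  cases b with
  | true =>
      have := W.sub_mem h3 hzW
      convert this using 1
      simp only [cond]
      module
  | false =>
      have := W.sub_mem hzW h3
      convert this using 1
      simp only [cond]
      module

lemma span_eq_top {F : Fin q → Fin q → Prop} {W : Submodule ℝ (Fin q → ℝ)}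
    (hW : ∀ k ℓ, F k ℓ → Pi.single k (1:ℝ) + Pi.single ℓ 1 ∈ W)
    (hconn : GraphConnected F) (hodd : HasOddCycle F) :
    W = ⊤ := by
  rw [eq_top_iff]
  intro x _
  have hx : x = ∑ i, x i • (Pi.single i 1 : Fin q → ℝ) := by
    funext j
    simp [Pi.single_apply]
  rw [hx]
  exact W.sum_mem fun i _ => W.smul_mem _ (single_mem_all hW hconn hodd i)

lemma finrank_lower {F : Fin q → Fin q → Prop} {W : Submodule ℝ (Fin q → ℝ)}
    (hW : ∀ k ℓ, F k ℓ → Pi.single k (1:ℝ) + Pi.single ℓ 1 ∈ W)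
    (hconn : GraphConnected F) (hq : 0 < q) :
    q - 1 ≤ Module.finrank ℝ W := by
  classical
  set z : Fin q := ⟨0, hq⟩ with hz
  choose b hb using fun i => walk_total hconn z i
  set ε : Fin q → ℝ := fun i => cond (b i) 1 (-1) with hε
  set u : {i : Fin q // i ≠ z} → (Fin q → ℝ) :=
    fun i => Pi.single z 1 + ε i.1 • (Pi.single i.1 1 : Fin q → ℝ) with hu
  have hεne : ∀ i, ε i ≠ 0 := by
    intro i
    rw [hε]
    cases h : b i <;> simp [h]
  have hmem : ∀ i, u i ∈ W := fun i => mem_of_walk hW (hb i.1)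
  have hind : LinearIndependent ℝ u := by
    rw [linearIndependent_iff']
    intro s g hg i hi
    have h2 := congrFun hg i.1
    rw [Finset.sum_apply] at h2
    have hval : ∀ j : {i : Fin q // i ≠ z}, (g j • u j) i.1 =
        if j = i then g j * ε i.1 else 0 := by
      intro j
      simp only [hu, Pi.smul_apply, Pi.add_apply, smul_eq_mul]
      rw [Pi.single_eq_of_ne i.2]
      by_cases hji : j = i
      · subst hji
        simp
      · have hne : i.1 ≠ j.1 := fun h => hji (Subtype.ext h.symm)
        rw [Pi.single_eq_of_ne hne]
        simp [hji]
    rw [Finset.sum_congr rfl fun j _ => hval j] at h2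
    rw [Finset.sum_ite_eq' s i (fun j => g j * ε i.1), if_pos hi] at h2
    simp only [Pi.zero_apply] at h2
    exact (mul_eq_zero.1 h2).resolve_right (hεne i.1)
  have hle : Submodule.span ℝ (Set.range u) ≤ W := by
    rw [Submodule.span_le]
    rintro x ⟨i, rfl⟩
    exact hmem i
  have hcard : Fintype.card {i : Fin q // i ≠ z} = q - 1 := by
    simp [Fintype.card_subtype_compl, Fintype.card_subtype_eq]
  calc q - 1 = Module.finrank ℝ (Submodule.span ℝ (Set.range u)) := by
        rw [finrank_span_eq_card hind, hcard]
    _ ≤ Module.finrank ℝ W := Submodule.finrank_mono hle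

end EPAux

open Classical in
/-- for a connected graph `S` on `q` nodes, possibly with self-loops,
the affine dimension (rank) of the edge polytope `X(S)` is `q - 1` if `S` has an odd
cycle and `q - 2` otherwise. -/
theorem edgePolytope_rank {q : ℕ} (F : Fin q → Fin q → Prop)
    (Fsymm : ∀ k ℓ, F k ℓ → F ℓ k) (hconn : GraphConnected F) :
    Module.finrank ℝ (vectorSpan ℝ (edgePolytope F)) =
      if HasOddCycle F then q - 1 else q - 2 := by
  classical
  set G : Set (Fin q → ℝ) := {x | ∃ k ℓ, F k ℓ ∧ x = incVec k ℓ} with hG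
  have hVS : vectorSpan ℝ (edgePolytope F) = vectorSpan ℝ G := by
    rw [edgePolytope, ← direction_affineSpan, affineSpan_convexHull, direction_affineSpan]
  rw [hVS]
  by_cases hE : ∃ k ℓ, F k ℓ
  case neg =>
    have hGempty : G = ∅ := by
      ext x
      simp only [hG, Set.mem_setOf_eq, Set.mem_empty_iff_false, iff_false]
      rintro ⟨k, ℓ, hF, -⟩
      exact hE ⟨k, ℓ, hF⟩
    have hnodd : ¬ HasOddCycle F := by
      intro h
      exact h ⟨fun _ => true, fun i j hF => absurd ⟨i, j, hF⟩ hE⟩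
    have hq : q ≤ 1 := by
      by_contra hq
      push_neg at hq
      have h01 : (⟨0, by omega⟩ : Fin q) ≠ ⟨1, by omega⟩ := by
        simp [Fin.ext_iff]
      have hcw := hconn ⟨0, by omega⟩ ⟨1, by omega⟩
      rcases hcw.cases_head with h | ⟨c, hc, -⟩
      · exact h01 h
      · exact hE ⟨_, _, hc⟩
    rw [if_neg hnodd, hGempty, vectorSpan_empty, finrank_bot]
    omega
  case pos =>
    obtain ⟨a, e, hae⟩ := hE
    have hq : 0 < q := a.pos
    set W := Submodule.span ℝ G with hWdef
    have hWgen : ∀ k ℓ, F k ℓ → Pi.single k (1:ℝ) + (Pi.single ℓ 1 : Fin q → ℝ) ∈ W := by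
      intro k ℓ hF
      have hmem : incVec k ℓ ∈ W := Submodule.subset_span ⟨k, ℓ, hF, rfl⟩
      have h2 := W.smul_mem (2:ℝ) hmem
      convert h2 using 1
      rw [incVec, smul_smul]
      norm_num
    set σ := EPAux.wt (fun _ : Fin q => (1:ℝ)) with hσ
    have hσG : ∀ x ∈ G, σ x = 1 := by
      rintro x ⟨k, ℓ, hF, rfl⟩
      rw [incVec, map_smul, map_add, EPAux.wt_single, EPAux.wt_single]
      norm_num
    set V := vectorSpan ℝ G with hVdef
    have hVle : V ≤ LinearMap.ker σ := by
      rw [hVdef, vectorSpan_def, Submodule.span_le]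
      intro x hx
      obtain ⟨v, hv, w, hw, rfl⟩ := hx
      simp [LinearMap.mem_ker, vsub_eq_sub, map_sub, hσG v hv, hσG w hw]
    set v₀ := incVec a e with hv₀def
    have hv₀G : v₀ ∈ G := ⟨a, e, hae, rfl⟩
    have hσv₀ : σ v₀ = 1 := hσG v₀ hv₀G
    have hWV : W = V ⊔ Submodule.span ℝ {v₀} := by
      apply le_antisymm
      · rw [hWdef, Submodule.span_le]
        intro x hx
        have h1 : x - v₀ ∈ V := by
          rw [hVdef, vectorSpan_def]
          exact Submodule.subset_span (vsub_eq_sub x v₀ ▸ Set.vsub_mem_vsub hx hv₀G)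
        have h3 : x = (x - v₀) + v₀ := (sub_add_cancel x v₀).symm
        rw [h3]
        exact Submodule.add_mem _ (Submodule.mem_sup_left h1)
          (Submodule.mem_sup_right (Submodule.subset_span rfl))
      · apply sup_le
        · rw [hVdef, vectorSpan_def, Submodule.span_le]
          intro x hx
          obtain ⟨v, hv, w, hw, rfl⟩ := hx
          simp only [vsub_eq_sub, SetLike.mem_coe]
          exact Submodule.sub_mem _ (Submodule.subset_span hv) (Submodule.subset_span hw)
        · rw [Submodule.span_le, Set.singleton_subset_iff]
          exact Submodule.subset_span hv₀G
    have hv₀ne : v₀ ≠ 0 := by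
      intro h
      rw [h, map_zero] at hσv₀
      norm_num at hσv₀
    have hinf : V ⊓ Submodule.span ℝ {v₀} = ⊥ := by
      rw [eq_bot_iff]
      rintro x ⟨hxV, hxs⟩
      obtain ⟨c, rfl⟩ := Submodule.mem_span_singleton.1 hxs
      have h0 : σ (c • v₀) = 0 := hVle hxV
      rw [map_smul, hσv₀, smul_eq_mul, mul_one] at h0
      simp [h0]
    have hrk := Submodule.finrank_sup_add_finrank_inf_eq V (Submodule.span ℝ {v₀})
    rw [hinf, finrank_bot, finrank_span_singleton hv₀ne, ← hWV] at hrk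
    -- hrk : finrank W + 0 = finrank V + 1
    by_cases hodd : HasOddCycle F
    · rw [if_pos hodd]
      have hWtop : W = ⊤ := EPAux.span_eq_top hWgen hconn hodd
      have hq2 : Module.finrank ℝ W = q := by
        rw [hWtop, finrank_top, Module.finrank_pi, Fintype.card_fin]
      omega
    · rw [if_neg hodd]
      obtain ⟨c, hc⟩ := not_not.1 hodd
      set τ := EPAux.wt (fun i : Fin q => if c i then (1:ℝ) else -1) with hτ
      have hWker : W ≤ LinearMap.ker τ := by
        rw [hWdef, Submodule.span_le]
        rintro x ⟨k, ℓ, hF, rfl⟩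
        have hckl := hc k ℓ hF
        rw [SetLike.mem_coe, LinearMap.mem_ker, incVec, map_smul, map_add,
          EPAux.wt_single, EPAux.wt_single]
        cases hck : c k <;> cases hcl : c ℓ <;> simp_all
      have hτsurj : LinearMap.range τ = ⊤ := by
        rw [LinearMap.range_eq_top]
        intro y
        refine ⟨(y * (if c a then 1 else -1)) • (Pi.single a 1 : Fin q → ℝ), ?_⟩
        rw [map_smul, EPAux.wt_single, smul_eq_mul]
        by_cases h : c a <;> simp [h] <;> ring
      have hker : Module.finrank ℝ (LinearMap.ker τ) = q - 1 := by
        have h1 := LinearMap.finrank_range_add_finrank_ker τ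
        rw [hτsurj, finrank_top, Module.finrank_self, Module.finrank_pi,
          Fintype.card_fin] at h1
        omega
      have hub : Module.finrank ℝ W ≤ q - 1 := by
        rw [← hker]
        exact Submodule.finrank_mono hWker
      have hlb : q - 1 ≤ Module.finrank ℝ W := EPAux.finrank_lower hWgen hconn hq
      omega
end

section
/- Let S = (U,F) be a finite undirected graph on q nodes, possibly with self-loops. Then the edge polytope X(S) equals the set of row-sum vectors {A·1 : A ∈ A(S)}, where A(S) is the set of q×q nonnegative matrices supported on F with A·1 = Aᵀ·1 and total sum of entries equal to 1. -/
open Matrix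

def matSet {q : ℕ} (F : Fin q → Fin q → Prop) : Set (Matrix (Fin q) (Fin q) ℝ) :=
  {A | (∀ i j, 0 ≤ A i j) ∧ (∀ i j, ¬ F i j → A i j = 0) ∧
    A *ᵥ (fun _ => 1) = Aᵀ *ᵥ (fun _ => 1) ∧ ∑ i, ∑ j, A i j = 1}

/-- the edge polytope `X(S)` equals the set of row-sum vectors
`{A·1 : A ∈ A(S)}`. -/
theorem edgePolytope_eq_rowSums {q : ℕ} (F : Fin q → Fin q → Prop)
    (Fsymm : ∀ k ℓ, F k ℓ → F ℓ k) :
    edgePolytope F = {x | ∃ A ∈ matSet F, x = A *ᵥ (fun _ => 1)} := by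
  ext x
  constructor
  · intro hx
    have hconv : Convex ℝ {x : Fin q → ℝ | ∃ A ∈ matSet F, x = A *ᵥ (fun _ => 1)} := by
      rintro _ ⟨A, ⟨hA1, hA2, hA3, hA4⟩, rfl⟩ _ ⟨B, ⟨hB1, hB2, hB3, hB4⟩, rfl⟩ a b ha hb hab
      refine ⟨a • A + b • B, ⟨?_, ?_, ?_, ?_⟩, ?_⟩
      · intro i j
        have := hA1 i j; have := hB1 i j
        simp only [Matrix.add_apply, Matrix.smul_apply, smul_eq_mul]
        positivity
      · intro i j h
        simp [Matrix.add_apply, Matrix.smul_apply, hA2 i j h, hB2 i j h]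
      · simp [Matrix.add_mulVec, Matrix.smul_mulVec, Matrix.transpose_add,
          Matrix.transpose_smul, hA3, hB3]
      · simp only [Matrix.add_apply, Matrix.smul_apply, smul_eq_mul, Finset.sum_add_distrib,
          ← Finset.mul_sum]
        rw [hA4, hB4]
        simpa using hab
      · simp [Matrix.add_mulVec, Matrix.smul_mulVec]
    refine convexHull_min ?_ hconv hx
    rintro y ⟨k, ℓ, hF, rfl⟩
    refine ⟨(1/2 : ℝ) • (Matrix.single k ℓ 1 + Matrix.single ℓ k 1),
      ⟨?_, ?_, ?_, ?_⟩, ?_⟩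
    · intro i j
      simp only [Matrix.smul_apply, Matrix.add_apply, Matrix.single, Matrix.of_apply,
        smul_eq_mul]
      positivity
    · intro i j h
      have h1 : ¬(k = i ∧ ℓ = j) := by rintro ⟨rfl, rfl⟩; exact h hF
      have h2 : ¬(ℓ = i ∧ k = j) := by rintro ⟨rfl, rfl⟩; exact h (Fsymm _ _ hF)
      simp [Matrix.single, h1, h2]
    · have hsym : ((1/2 : ℝ) • (Matrix.single k ℓ (1:ℝ) + Matrix.single ℓ k (1:ℝ)))ᵀ
          = (1/2 : ℝ) • (Matrix.single k ℓ (1:ℝ) + Matrix.single ℓ k (1:ℝ)) := by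
        ext i j
        simp only [Matrix.transpose_apply, Matrix.smul_apply, Matrix.add_apply,
          Matrix.single, Matrix.of_apply, smul_eq_mul]
        split_ifs <;> (try tauto) <;> norm_num
      rw [hsym]
    · have hstd : ∀ (a b : Fin q), ∑ i, ∑ j, Matrix.single a b (1:ℝ) i j = 1 := by
        intro a b
        simp [Matrix.single, ite_and]
      simp only [Matrix.smul_apply, Matrix.add_apply, smul_eq_mul, Finset.sum_add_distrib,
        ← Finset.mul_sum]
      rw [hstd, hstd]
      norm_num
    · funext m
      have h1 : ∀ (a b : Fin q), ∑ x, Matrix.single a b (1:ℝ) m x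
          = if a = m then 1 else 0 := by
        intro a b
        simp [Matrix.single, ite_and]
      have h2 : (((1/2 : ℝ) • (Matrix.single k ℓ (1:ℝ)
            + Matrix.single ℓ k (1:ℝ))) *ᵥ fun _ => (1:ℝ)) m
          = (1/2) * ((∑ x, Matrix.single k ℓ (1:ℝ) m x)
            + ∑ x, Matrix.single ℓ k (1:ℝ) m x) := by
        simp [Matrix.mulVec, dotProduct, Finset.sum_add_distrib, Finset.mul_sum, mul_add]
      rw [h2, h1, h1]
      have e3 : ∀ (a : Fin q), (if a = m then (1:ℝ) else 0) = (if m = a then (1:ℝ) else 0) := by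
        intro a; exact if_congr eq_comm rfl rfl
      rw [e3, e3]
      simp only [incVec, Pi.smul_apply, Pi.add_apply, Pi.single_apply, smul_eq_mul]
  · rintro ⟨A, ⟨hpos, hsupp, hbal, hsum⟩, rfl⟩
    have hsum' : ∑ p : Fin q × Fin q, A p.1 p.2 = 1 := by
      rw [Fintype.sum_prod_type]; exact hsum
    have key : A *ᵥ (fun _ => 1) =
        ∑ p : Fin q × Fin q, A p.1 p.2 • incVec p.1 p.2 := by
      funext m
      have hb := congrFun hbal m
      simp only [Matrix.mulVec, dotProduct, Matrix.transpose_apply, mul_one] at hb ⊢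
      rw [Finset.sum_apply]
      simp only [incVec, Pi.smul_apply, Pi.add_apply, Pi.single_apply, smul_eq_mul]
      rw [Fintype.sum_prod_type]
      have : ∀ i j : Fin q, A i j * ((1/2 : ℝ) * ((if m = i then (1:ℝ) else 0) +
          (if m = j then (1:ℝ) else 0))) =
          (1/2) * (A i j * (if m = i then (1:ℝ) else 0))
            + (1/2) * (A i j * (if m = j then (1:ℝ) else 0)) := by
        intro i j; ring
      simp only [this, Finset.sum_add_distrib, ← Finset.mul_sum]
      have e1 : ∑ i, ∑ j, A i j * (if m = i then (1:ℝ) else 0) = ∑ j, A m j := by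
        rw [Finset.sum_comm]
        simp [mul_ite, eq_comm, Finset.sum_ite_eq]
      have e2 : ∑ i, ∑ j, A i j * (if m = j then (1:ℝ) else 0) = ∑ i, A i m := by
        simp [mul_ite, eq_comm, Finset.sum_ite_eq]
      rw [e1, e2, ← hb]
      ring
    rw [key]
    have hsum_t : ∑ p ∈ Finset.univ.filter (fun p : Fin q × Fin q => A p.1 p.2 ≠ 0),
        A p.1 p.2 = 1 := by
      rw [Finset.sum_filter_ne_zero]; exact hsum'
    have heq : ∑ p : Fin q × Fin q, A p.1 p.2 • incVec p.1 p.2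
        = ∑ p ∈ Finset.univ.filter (fun p : Fin q × Fin q => A p.1 p.2 ≠ 0),
          A p.1 p.2 • incVec p.1 p.2 := by
      refine (Finset.sum_subset (Finset.filter_subset _ _) ?_).symm
      intro p _ hp
      rw [Finset.mem_filter] at hp
      push_neg at hp
      rw [hp (Finset.mem_univ p), zero_smul]
    rw [heq]
    refine Convex.sum_mem (convex_convexHull ℝ _) (fun p _ => hpos p.1 p.2) hsum_t ?_
    intro p hp
    rw [Finset.mem_filter] at hp
    exact subset_convexHull ℝ _ ⟨p.1, p.2, by
      by_contra h
      exact hp.2 (hsupp p.1 p.2 h), rfl⟩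
end

section
/- Let G = (V,E) be a finite undirected graph, S = (U,F) an undirected graph (self-loops allowed), and π : V → U a graph homomorphism. If the empirical concentration vector x (with x_i = |π^{-1}(u_i)|/|V|) does not lie in the edge polytope X(S), then the directed version of G has no Hamiltonian decomposition. -/
open Finset

lemma sum_fiber_one {V : Type*} [Fintype V] [DecidableEq V] (H : Finset (V × V))
    (f : V × V → V) (h : ∀ v, (H.filter (fun e => f e = v)).card = 1) (g : V → ℝ) :
    ∑ e ∈ H, g (f e) = ∑ v, g v := by
  rw [← Finset.sum_fiberwise_of_maps_to (t := univ) (fun e _ => mem_univ (f e))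
    (fun e => g (f e))]
  refine Finset.sum_congr rfl fun v _ => ?_
  have : ∀ e ∈ H.filter (fun e => f e = v), g (f e) = g v := by
    intro e he
    rw [(Finset.mem_filter.1 he).2]
  rw [Finset.sum_congr rfl this, Finset.sum_const, h v, one_smul]

/-- let `π` be a graph homomorphism from a finite graph `G` to `S`.
If the empirical concentration vector `x_i = |π⁻¹(u_i)|/|V|` does not lie in the edge
polytope `X(S)`, then the directed version of `G` has no Hamiltonian decomposition. -/
theorem no_hamiltonian_decomposition {V : Type*} [Fintype V] [DecidableEq V]
    [Nonempty V] {q : ℕ} (G : SimpleGraph V) (F : Fin q → Fin q → Prop)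
    (Fsymm : ∀ k ℓ, F k ℓ → F ℓ k) (π : V → Fin q)
    (hhom : ∀ v w, G.Adj v w → F (π v) (π w))
    (hx : (fun i => ((univ.filter (fun v => π v = i)).card : ℝ) / Fintype.card V)
        ∉ edgePolytope F) :
    ¬ ∃ H : Finset (V × V), (∀ e ∈ H, G.Adj e.1 e.2) ∧
        (∀ v : V, (H.filter (fun e => e.1 = v)).card = 1) ∧
        (∀ v : V, (H.filter (fun e => e.2 = v)).card = 1) := by
  rintro ⟨H, hadj, hout, hin⟩
  apply hx
  have hnpos : (0 : ℝ) < Fintype.card V := by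
    exact_mod_cast Fintype.card_pos
  have hcard : H.card = Fintype.card V := by
    rw [Finset.card_eq_sum_card_fiberwise (f := fun e => e.1) (t := univ)
      (fun e _ => mem_univ e.1)]
    simp [hout]
  have hmem : ∀ e ∈ H, incVec (π e.1) (π e.2) ∈
      {x : Fin q → ℝ | ∃ k ℓ, F k ℓ ∧ x = incVec k ℓ} :=
    fun e he => ⟨_, _, hhom _ _ (hadj e he), rfl⟩
  have hw : ∀ e ∈ H, (0 : ℝ) ≤ 1 := fun _ _ => zero_le_one
  have hwsum : (0 : ℝ) < ∑ _e ∈ H, (1 : ℝ) := by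
    rw [Finset.sum_const, nsmul_eq_mul, mul_one, hcard]; exact hnpos
  have hc := Finset.centerMass_mem_convexHull H hw hwsum hmem
  have hEq : (fun i => ((univ.filter (fun v => π v = i)).card : ℝ) / Fintype.card V)
      = H.centerMass (fun _ => (1 : ℝ)) (fun e => incVec (π e.1) (π e.2)) := by
    rw [Finset.centerMass]
    funext i
    simp only [Finset.sum_const, nsmul_eq_mul, mul_one, hcard, one_smul,
      Pi.smul_apply, Finset.sum_apply, smul_eq_mul]
    have key : ∑ e ∈ H, incVec (π e.1) (π e.2) i
        = ((univ.filter (fun v => π v = i)).card : ℝ) := by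
      have h1 : ∑ e ∈ H, (Pi.single (π e.1) (1:ℝ) : Fin q → ℝ) i
          = ((univ.filter (fun v => π v = i)).card : ℝ) := by
        rw [sum_fiber_one H Prod.fst hout (fun v => (Pi.single (π v) (1:ℝ) : Fin q → ℝ) i)]
        simp only [Pi.single_apply]
        rw [Finset.sum_boole]
        congr 2
        apply Finset.filter_congr
        intro v _
        simp [eq_comm]
      have h2 : ∑ e ∈ H, (Pi.single (π e.2) (1:ℝ) : Fin q → ℝ) i
          = ((univ.filter (fun v => π v = i)).card : ℝ) := by
        rw [sum_fiber_one H Prod.snd hin (fun v => (Pi.single (π v) (1:ℝ) : Fin q → ℝ) i)]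
        simp only [Pi.single_apply]
        rw [Finset.sum_boole]
        congr 2
        apply Finset.filter_congr
        intro v _
        simp [eq_comm]
      simp only [incVec, Pi.smul_apply, Pi.add_apply, smul_eq_mul]
      rw [Finset.sum_congr rfl (fun e _ => rfl), ← Finset.mul_sum, Finset.sum_add_distrib,
        h1, h2]
      ring
    rw [key, div_eq_inv_mul]
  rw [hEq]
  exact hc
end

section
/- Let q ≥ 1 and let A be a q×q real matrix that is infinitesimally doubly stochastic, i.e., off-diagonal entries nonnegative, A·1 = 0, and Aᵀ·1 = 0. For a directed cycle C = (i_1, …, i_m) of distinct indices, m ≥ 2, let L_C be its Laplacian: (L_C)_{i_k i_{k+1}} = 1 (indices mod m), (L_C)_{i_k i_k} = −1, all other entries 0. Then −diag(L_C) = Σ_{k=1}^m e_{i_k}, and every such A is a nonnegative combination of matrices L_C over directed cycles C. -/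
open Matrix Finset

/-- The Laplacian `L_C` of the directed cycle given by an injective `c : Fin m → Fin q`
(edges `c k → c (k+1)` cyclically): entry `1` at `(c k, c (k+1))`, entry `−1` at
`(c k, c k)`, all other entries `0`. -/
noncomputable def cycleLap {q m : ℕ} (c : Fin m → Fin q) : Matrix (Fin q) (Fin q) ℝ :=
  ∑ k : Fin m,
    (Matrix.single (c k) (c (finRotate m k)) 1 -
      Matrix.single (c k) (c k) 1)

lemma finRotate_ne_self {m : ℕ} (hm : 2 ≤ m) (k : Fin m) : finRotate m k ≠ k := by
  obtain ⟨n, rfl⟩ : ∃ n, m = n + 1 := ⟨m - 1, by omega⟩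
  rw [finRotate_succ_apply]
  intro h
  have hv := congrArg Fin.val h
  rw [Fin.val_add_one] at hv
  by_cases hk : k = Fin.last n
  · rw [if_pos hk] at hv; subst hk; simp [Fin.val_last] at hv; omega
  · rw [if_neg hk] at hv; omega

lemma finRotate_val {m : ℕ} (hm : 1 ≤ m) (k : Fin m) :
    (finRotate m k).val = (k.val + 1) % m := by
  obtain ⟨n, rfl⟩ : ∃ n, m = n + 1 := ⟨m - 1, by omega⟩
  rw [coe_finRotate]
  by_cases hk : k = Fin.last n
  · subst hk; simp [Fin.val_last, Nat.mod_self]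
  · have hlt : k.val < n := Fin.val_lt_last hk
    rw [if_neg hk, Nat.mod_eq_of_lt (by omega)]

lemma cycleLap_apply {q m : ℕ} (c : Fin m → Fin q) (a b : Fin q) :
    cycleLap c a b = ∑ k : Fin m,
      ((if c k = a ∧ c (finRotate m k) = b then (1:ℝ) else 0) -
       (if c k = a ∧ c k = b then (1:ℝ) else 0)) := by
  simp [cycleLap, Matrix.sum_apply, Matrix.sub_apply, Matrix.single, Matrix.of_apply]

lemma cycleLap_diag {q m : ℕ} (hm : 2 ≤ m) {c : Fin m → Fin q}
    (hc : Function.Injective c) (i : Fin q) :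
    Matrix.diag (cycleLap c) i = -∑ k : Fin m, (if c k = i then (1:ℝ) else 0) := by
  rw [Matrix.diag_apply, cycleLap_apply, ← Finset.sum_neg_distrib]
  refine Finset.sum_congr rfl fun k _ => ?_
  have h1 : ¬(c k = i ∧ c (finRotate m k) = i) := by
    rintro ⟨h, h'⟩
    exact finRotate_ne_self hm k (hc (h'.trans h.symm))
  rw [if_neg h1]
  by_cases h : c k = i <;> simp [h]

lemma cycleLap_rowsum {q m : ℕ} (c : Fin m → Fin q) (i : Fin q) :
    ∑ j, cycleLap c i j = 0 := by
  simp only [cycleLap_apply]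
  rw [Finset.sum_comm]
  refine Finset.sum_eq_zero fun k _ => ?_
  rw [Finset.sum_sub_distrib]
  simp [ite_and]

lemma cycleLap_colsum {q m : ℕ} (c : Fin m → Fin q) (j : Fin q) :
    ∑ i, cycleLap c i j = 0 := by
  simp only [cycleLap_apply]
  rw [Finset.sum_comm]
  have h : ∀ k : Fin m, (∑ a : Fin q,
      ((if c k = a ∧ c (finRotate m k) = j then (1:ℝ) else 0) -
       (if c k = a ∧ c k = j then (1:ℝ) else 0)))
      = (if c (finRotate m k) = j then (1:ℝ) else 0) - (if c k = j then (1:ℝ) else 0) := by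
    intro k
    rw [Finset.sum_sub_distrib]
    congr 1 <;> simp [ite_and]
  rw [Finset.sum_congr rfl fun k _ => h k, Finset.sum_sub_distrib]
  rw [← Equiv.sum_comp (finRotate m) (fun x => if c x = j then (1:ℝ) else 0)]
  ring

lemma cycleLap_edge {q m : ℕ} (hm : 2 ≤ m) {c : Fin m → Fin q}
    (hc : Function.Injective c) (k : Fin m) :
    cycleLap c (c k) (c (finRotate m k)) = 1 := by
  rw [cycleLap_apply]
  have h : ∀ l : Fin m,
      ((if c l = c k ∧ c (finRotate m l) = c (finRotate m k) then (1:ℝ) else 0) -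
       (if c l = c k ∧ c l = c (finRotate m k) then (1:ℝ) else 0))
      = if l = k then 1 else 0 := by
    intro l
    by_cases hlk : l = k
    · subst hlk
      have h2 : ¬(c l = c l ∧ c l = c (finRotate m l)) := by
        rintro ⟨-, h'⟩
        exact finRotate_ne_self hm l (hc h'.symm)
      rw [if_pos ⟨rfl, rfl⟩, if_neg h2, if_pos rfl]
      ring
    · have h1 : c l ≠ c k := fun e => hlk (hc e)
      simp [h1, hlk]
  rw [Finset.sum_congr rfl fun l _ => h l]
  simp

lemma cycleLap_offdiag_zero {q m : ℕ} {c : Fin m → Fin q} {a b : Fin q} (hab : a ≠ b)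
    (h : ∀ k, ¬(c k = a ∧ c (finRotate m k) = b)) : cycleLap c a b = 0 := by
  rw [cycleLap_apply]
  refine Finset.sum_eq_zero fun k _ => ?_
  have h2 : ¬(c k = a ∧ c k = b) := by rintro ⟨h1, h2⟩; exact hab (h1.symm.trans h2)
  rw [if_neg (h k), if_neg h2, sub_zero]

/-- In a directed graph where the head of every edge has an outgoing edge,
the existence of an edge gives a directed cycle on distinct vertices. -/
lemma exists_cycle {q : ℕ} (E : Fin q → Fin q → Prop)
    (hirr : ∀ i j, E i j → i ≠ j)
    (hstep : ∀ i j, E i j → ∃ k, E j k)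
    {i0 j0 : Fin q} (h0 : E i0 j0) :
    ∃ (m : ℕ) (c : Fin m → Fin q), 2 ≤ m ∧ Function.Injective c ∧
      ∀ k : Fin m, E (c k) (c (finRotate m k)) := by
  classical
  have h0' : ∃ y, E i0 y := ⟨j0, h0⟩
  let f : ℕ → {x : Fin q // ∃ y, E x y} := fun n =>
    Nat.rec ⟨i0, h0'⟩ (fun _ p => ⟨p.2.choose, hstep _ _ p.2.choose_spec⟩) n
  let g : ℕ → Fin q := fun n => (f n).1
  have hf : ∀ n, E (g n) (g (n + 1)) := fun n => (f n).2.choose_spec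
  have hP : ∃ b, ∃ a, a < b ∧ g a = g b := by
    have hcard : Fintype.card (Fin q) < Fintype.card (Fin (q + 1)) := by simp
    obtain ⟨x, y, hxy, he⟩ := Fintype.exists_ne_map_eq_of_card_lt
      (fun i : Fin (q + 1) => g i.val) hcard
    rcases lt_or_gt_of_ne hxy with h | h
    · exact ⟨y.val, x.val, h, he⟩
    · exact ⟨x.val, y.val, h, he.symm⟩
  let b₀ := Nat.find hP
  obtain ⟨a, hab, hg⟩ : ∃ a, a < b₀ ∧ g a = g b₀ := Nat.find_spec hP
  have hmin : ∀ b < b₀, ¬ ∃ a, a < b ∧ g a = g b := fun b hb => Nat.find_min hP hb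
  set m := b₀ - a with hm
  have hb₀ : b₀ = a + m := by omega
  have key : ∀ x y : ℕ, x < y → y < m → g (a + x) ≠ g (a + y) := by
    intro x y hxy hy hgeq
    exact hmin (a + y) (by omega) ⟨a + x, by omega, hgeq⟩
  have hm2 : 2 ≤ m := by
    by_contra h
    have hm1 : m = 1 := by omega
    have hne : g a ≠ g (a + 1) := hirr _ _ (hf a)
    apply hne
    rw [hg, hb₀, hm1]
  let c : Fin m → Fin q := fun k => g (a + k.val)
  have hcrot : ∀ k : Fin m, c (finRotate m k) = g (a + k.val + 1) := by
    intro k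
    show g (a + (finRotate m k).val) = g (a + k.val + 1)
    rw [finRotate_val (by omega) k]
    by_cases hk : k.val + 1 < m
    · rw [Nat.mod_eq_of_lt hk]
      congr 1
    · have hkm : k.val + 1 = m := by have := k.isLt; omega
      rw [hkm, Nat.mod_self]
      have : a + k.val + 1 = b₀ := by omega
      rw [this, ← hg]
      rfl
  refine ⟨m, c, hm2, ?_, ?_⟩
  · intro k l h
    by_contra hkl
    rcases lt_trichotomy k.val l.val with hlt | heq | hgt
    · exact key k.val l.val hlt l.isLt h
    · exact hkl (Fin.ext heq)
    · exact key l.val k.val hgt k.isLt h.symm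
  · intro k
    rw [hcrot k]
    exact hf (a + k.val)

lemma birkhoff_trivial {q : ℕ} (A : Matrix (Fin q) (Fin q) ℝ)
    (hoff : ∀ i j, i ≠ j → A i j = 0) (hrow : ∀ i, ∑ j, A i j = 0) :
    ∃ (n : ℕ) (coef : Fin n → ℝ) (m : Fin n → ℕ)
        (c : (t : Fin n) → Fin (m t) → Fin q),
      (∀ t, 2 ≤ m t) ∧ (∀ t, Function.Injective (c t)) ∧ (∀ t, 0 ≤ coef t) ∧
      A = ∑ t, coef t • cycleLap (c t) := by
  have hA : A = 0 := by
    ext i j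
    by_cases hij : i = j
    · subst hij
      have := hrow i
      rwa [Finset.sum_eq_single_of_mem i (Finset.mem_univ i)
        (fun b _ hb => hoff i b (Ne.symm hb))] at this
    · exact hoff i j hij
  exact ⟨0, fun t => t.elim0, fun t => t.elim0, fun t => t.elim0,
    fun t => t.elim0, fun t => t.elim0, fun t => t.elim0, by simp [hA]⟩

lemma birkhoff_aux {q : ℕ} (N : ℕ) :
    ∀ A : Matrix (Fin q) (Fin q) ℝ,
    {p : Fin q × Fin q | p.1 ≠ p.2 ∧ A p.1 p.2 ≠ 0}.ncard ≤ N →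
    (∀ i j, i ≠ j → 0 ≤ A i j) → (∀ i, ∑ j, A i j = 0) → (∀ j, ∑ i, A i j = 0) →
    ∃ (n : ℕ) (coef : Fin n → ℝ) (m : Fin n → ℕ)
        (c : (t : Fin n) → Fin (m t) → Fin q),
      (∀ t, 2 ≤ m t) ∧ (∀ t, Function.Injective (c t)) ∧ (∀ t, 0 ≤ coef t) ∧
      A = ∑ t, coef t • cycleLap (c t) := by
  induction N with
  | zero =>
    intro A hcard hpos hrow hcol
    refine birkhoff_trivial A ?_ hrow
    intro i j hij
    by_contra hne
    have hmem : (i, j) ∈ {p : Fin q × Fin q | p.1 ≠ p.2 ∧ A p.1 p.2 ≠ 0} := ⟨hij, hne⟩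
    have : {p : Fin q × Fin q | p.1 ≠ p.2 ∧ A p.1 p.2 ≠ 0} = ∅ :=
      (Set.ncard_eq_zero (Set.toFinite _)).mp (by omega)
    rw [this] at hmem
    exact hmem
  | succ N ih =>
    intro A hcard hpos hrow hcol
    by_cases h0 : ∀ i j, i ≠ j → A i j = 0
    · exact birkhoff_trivial A h0 hrow
    · push_neg at h0
      obtain ⟨i0, j0, hne0, hA0⟩ := h0
      set E : Fin q → Fin q → Prop := fun i j => i ≠ j ∧ A i j ≠ 0 with hE
      have hirr : ∀ i j, E i j → i ≠ j := fun i j h => h.1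
      have hstep : ∀ i j, E i j → ∃ k, E j k := by
        rintro i j ⟨hij, hij0⟩
        have hpos_ij : 0 < A i j := (hpos i j hij).lt_of_ne (Ne.symm hij0)
        have h1 : A j j + ∑ i' ∈ Finset.univ.erase j, A i' j = 0 := by
          rw [Finset.add_sum_erase Finset.univ (fun x => A x j) (Finset.mem_univ j)]; exact hcol j
        have h2 : A i j ≤ ∑ i' ∈ Finset.univ.erase j, A i' j :=
          Finset.single_le_sum (f := fun x => A x j)
            (fun x hx => hpos x j (Finset.ne_of_mem_erase hx))
            (Finset.mem_erase.mpr ⟨hij, Finset.mem_univ i⟩)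
        have h3 : A j j + ∑ k ∈ Finset.univ.erase j, A j k = 0 := by
          rw [Finset.add_sum_erase Finset.univ (fun x => A j x) (Finset.mem_univ j)]; exact hrow j
        have h4 : ∑ k ∈ Finset.univ.erase j, A j k ≠ 0 := by linarith
        obtain ⟨k, hk, hk0⟩ := Finset.exists_ne_zero_of_sum_ne_zero h4
        exact ⟨k, Ne.symm (Finset.ne_of_mem_erase hk), hk0⟩
      obtain ⟨m, c, hm2, hcinj, hedge⟩ := exists_cycle E hirr hstep ⟨hne0, hA0⟩
      have hne' : (Finset.univ : Finset (Fin m)).Nonempty :=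
        ⟨⟨0, by omega⟩, Finset.mem_univ _⟩
      set ε := Finset.univ.inf' hne' (fun k => A (c k) (c (finRotate m k))) with hεdef
      have hεpos : 0 < ε := by
        rw [hεdef, Finset.lt_inf'_iff]
        intro k _
        exact (hpos _ _ (hedge k).1).lt_of_ne (Ne.symm (hedge k).2)
      have hεle : ∀ k, ε ≤ A (c k) (c (finRotate m k)) :=
        fun k => Finset.inf'_le _ (Finset.mem_univ k)
      obtain ⟨k₀, -, hk₀⟩ := Finset.exists_mem_eq_inf' hne'
        (fun k => A (c k) (c (finRotate m k)))
      set A' := A - ε • cycleLap c with hA'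
      have hA'app : ∀ i j, A' i j = A i j - ε * cycleLap c i j := by
        intro i j
        simp [hA', Matrix.sub_apply, Matrix.smul_apply, smul_eq_mul]
      have hpos' : ∀ i j, i ≠ j → 0 ≤ A' i j := by
        intro i j hij
        rw [hA'app]
        by_cases he : ∃ k, c k = i ∧ c (finRotate m k) = j
        · obtain ⟨k, hk1, hk2⟩ := he
          rw [← hk1, ← hk2, cycleLap_edge hm2 hcinj, mul_one]
          have := hεle k
          linarith
        · rw [cycleLap_offdiag_zero hij (fun k hk => he ⟨k, hk⟩), mul_zero, sub_zero]
          exact hpos i j hij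
      have hrow' : ∀ i, ∑ j, A' i j = 0 := by
        intro i
        simp only [hA'app]
        rw [Finset.sum_sub_distrib, ← Finset.mul_sum, cycleLap_rowsum, hrow i, mul_zero,
          sub_zero]
      have hcol' : ∀ j, ∑ i, A' i j = 0 := by
        intro j
        simp only [hA'app]
        rw [Finset.sum_sub_distrib, ← Finset.mul_sum, cycleLap_colsum, hcol j, mul_zero,
          sub_zero]
      -- support strictly decreases
      have hss : {p : Fin q × Fin q | p.1 ≠ p.2 ∧ A' p.1 p.2 ≠ 0}
          ⊆ {p : Fin q × Fin q | p.1 ≠ p.2 ∧ A p.1 p.2 ≠ 0} := by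
        rintro ⟨i, j⟩ ⟨hij, hij0⟩
        refine ⟨hij, ?_⟩
        intro hAij
        apply hij0
        rw [hA'app]
        by_cases he : ∃ k, c k = i ∧ c (finRotate m k) = j
        · exfalso
          obtain ⟨k, hk1, hk2⟩ := he
          apply (hedge k).2
          rw [hk1, hk2]
          exact hAij
        · rw [cycleLap_offdiag_zero hij (fun k hk => he ⟨k, hk⟩), mul_zero, sub_zero]
          exact hAij
      have hmem : (c k₀, c (finRotate m k₀)) ∈
          {p : Fin q × Fin q | p.1 ≠ p.2 ∧ A p.1 p.2 ≠ 0} := ⟨(hedge k₀).1, (hedge k₀).2⟩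
      have hnot : (c k₀, c (finRotate m k₀)) ∉
          {p : Fin q × Fin q | p.1 ≠ p.2 ∧ A' p.1 p.2 ≠ 0} := by
        rintro ⟨-, hne2⟩
        apply hne2
        rw [hA'app, cycleLap_edge hm2 hcinj, mul_one, ← hk₀]
        ring
      have hlt : {p : Fin q × Fin q | p.1 ≠ p.2 ∧ A' p.1 p.2 ≠ 0}.ncard
          < {p : Fin q × Fin q | p.1 ≠ p.2 ∧ A p.1 p.2 ≠ 0}.ncard :=
        Set.ncard_lt_ncard ((Set.ssubset_iff_of_subset hss).mpr ⟨_, hmem, hnot⟩)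
          (Set.toFinite _)
      obtain ⟨n, coef, mm, cc, hc1, hc2, hc3, hc4⟩ :=
        ih A' (by omega) hpos' hrow' hcol'
      refine ⟨n + 1, Fin.cons (α := fun _ => ℝ) ε coef, Fin.cons (α := fun _ => ℕ) m mm,
        Fin.cons (α := fun t => Fin (Fin.cons (α := fun _ => ℕ) m mm t) → Fin q) c cc,
        ?_, ?_, ?_, ?_⟩
      · intro t
        induction t using Fin.cases with
        | zero => simpa using hm2
        | succ t => simpa using hc1 t
      · intro t
        induction t using Fin.cases with
        | zero => exact hcinj
        | succ t => exact hc2 t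
      · intro t
        induction t using Fin.cases with
        | zero => simpa using hεpos.le
        | succ t => simpa using hc3 t
      · rw [Fin.sum_univ_succ]
        simp only [Fin.cons_zero, Fin.cons_succ]
        change A = ε • cycleLap c + ∑ x, coef x • cycleLap (cc x)
        rw [← hc4, hA']
        abel

/-- for any directed cycle `C` on `m ≥ 2` distinct indices,
`−diag(L_C) = Σ_k e_{i_k}`; and every infinitesimally doubly stochastic matrix
(nonnegative off-diagonal entries, zero row sums and zero column sums) is a
nonnegative combination of cycle Laplacians `L_C`. -/
theorem infinitesimal_birkhoff {q : ℕ} :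
    (∀ (m : ℕ), 2 ≤ m → ∀ c : Fin m → Fin q, Function.Injective c →
      -Matrix.diag (cycleLap c) = ∑ k : Fin m, Pi.single (c k) (1 : ℝ)) ∧
    (∀ A : Matrix (Fin q) (Fin q) ℝ,
      (∀ i j, i ≠ j → 0 ≤ A i j) → A *ᵥ (fun _ => 1) = 0 → Aᵀ *ᵥ (fun _ => 1) = 0 →
      ∃ (n : ℕ) (coef : Fin n → ℝ) (m : Fin n → ℕ)
          (c : (t : Fin n) → Fin (m t) → Fin q),
        (∀ t, 2 ≤ m t) ∧ (∀ t, Function.Injective (c t)) ∧ (∀ t, 0 ≤ coef t) ∧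
        A = ∑ t, coef t • cycleLap (c t)) := by
  constructor
  · intro m hm c hc
    funext i
    rw [Pi.neg_apply, cycleLap_diag hm hc i, neg_neg, Finset.sum_apply]
    refine Finset.sum_congr rfl fun k _ => ?_
    rcases eq_or_ne (c k) i with h | h
    · simp [h, Pi.single_apply]
    · simp [h, Ne.symm h, Pi.single_apply]
  · intro A hpos hrv hcv
    have hrow : ∀ i, ∑ j, A i j = 0 := by
      intro i
      have := congrFun hrv i
      simpa [Matrix.mulVec, dotProduct] using this
    have hcol : ∀ j, ∑ i, A i j = 0 := by
      intro j
      have := congrFun hcv j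
      simpa [Matrix.mulVec, dotProduct, Matrix.transpose_apply] using this
    exact birkhoff_aux _ A le_rfl hpos hrow hcol
end
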